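/- (Cauchy–Binet formula for compound matrices.) Let F be a commutative ring, A an n×m matrix and B an m×p matrix over F, and let k be a positive integer with k ≤ min(n,m,p). Then (AB)^{(k)} = A^{(k)} B^{(k)}, i.e. for all k-element subsets α ⊆ {1,…,n} and γ ⊆ {1,…,p}, det((AB)[α,γ]) = Σ_{β ⊆ {1,…,m}, |β| = k} det(A[α,β]) det(B[β,γ]). -/
import Mathlib


open Matrix Finset Equiv

private theorem cauchyBinet {F : Type*} [CommRing F] {k m : ℕ}
    (M : Matrix (Fin k) (Fin m) F) (N : Matrix (Fin m) (Fin k) F) :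
    (M * N).det = ∑ S : {S : Finset (Fin m) // S.card = k},
      (M.submatrix id (S.1.orderEmbOfFin S.2)).det *
        (N.submatrix (S.1.orderEmbOfFin S.2) id).det := by
  classical
  -- Step 1: expand the determinant by multilinearity in the rows
  have step1 : (M * N).det
      = ∑ f : Fin k → Fin m, (∏ i, M i (f i)) * (N.submatrix f id).det := by
    have hMN : (M * N) = Matrix.of fun i => ∑ x, M i x • N x := by
      ext i j
      simp [Matrix.mul_apply]
    rw [hMN]
    show Matrix.detRowAlternating (fun i => ∑ x, M i x • N x) = _
    rw [show Matrix.detRowAlternating (n := Fin k) (R := F)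
          (fun i => ∑ x, M i x • N x)
        = (Matrix.detRowAlternating (n := Fin k) (R := F)).toMultilinearMap
          (fun i => ∑ x, M i x • N x) from rfl,
      MultilinearMap.map_sum]
    refine Finset.sum_congr rfl fun f _ => ?_
    have := (Matrix.detRowAlternating (n := Fin k) (R := F)).toMultilinearMap.map_smul_univ
      (fun i => M i (f i)) (fun i => N (f i))
    rw [this, smul_eq_mul]
    rfl
  rw [step1, ← Finset.sum_filter_add_sum_filter_not Finset.univ
    (fun f : Fin k → Fin m => Function.Injective f)]
  have step2 : ∑ f ∈ Finset.univ.filter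
      (fun f : Fin k → Fin m => ¬ Function.Injective f),
      (∏ i, M i (f i)) * (N.submatrix f id).det = 0 := by
    refine Finset.sum_eq_zero fun f hf => ?_
    simp only [Finset.mem_filter, Function.Injective, not_forall] at hf
    obtain ⟨i, j, hfij, hij⟩ := hf.2
    rw [Matrix.det_zero_of_row_eq hij (by ext l; simp [hfij]), mul_zero]
  rw [step2, add_zero]
  -- rewrite the RHS determinants as sums over permutations
  have expand : ∀ (S : Finset (Fin m)) (hS : S.card = k),
      (M.submatrix id (S.orderEmbOfFin hS)).det
        = ∑ σ : Perm (Fin k), (Perm.sign σ : F) * ∏ i, M i (S.orderEmbOfFin hS (σ i)) := by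
    intro S hS
    rw [← Matrix.det_transpose, Matrix.det_apply']
    rfl
  have rhseq : (∑ S : {S : Finset (Fin m) // S.card = k},
      (M.submatrix id (S.1.orderEmbOfFin S.2)).det *
        (N.submatrix (S.1.orderEmbOfFin S.2) id).det)
      = ∑ q : {S : Finset (Fin m) // S.card = k} × Perm (Fin k),
        ((Perm.sign q.2 : F) * ∏ i, M i (q.1.1.orderEmbOfFin q.1.2 (q.2 i)))
          * (N.submatrix (q.1.1.orderEmbOfFin q.1.2) id).det := by
    rw [Fintype.sum_prod_type]
    refine Finset.sum_congr rfl fun S _ => ?_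
    rw [expand S.1 S.2, Finset.sum_mul]
  rw [rhseq]
  refine (Finset.sum_bij
    (fun (q : {S : Finset (Fin m) // S.card = k} × Perm (Fin k)) _ =>
      (q.1.1.orderEmbOfFin q.1.2) ∘ q.2) ?_ ?_ ?_ ?_).symm
  · intro q _
    simp only [Finset.mem_filter, Finset.mem_univ, true_and]
    exact (q.1.1.orderEmbOfFin q.1.2).injective.comp q.2.injective
  · intro q1 h1 q2 h2 heq'
    have heq : (q1.1.1.orderEmbOfFin q1.1.2) ∘ q1.2
        = (q2.1.1.orderEmbOfFin q2.1.2) ∘ q2.2 := heq'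
    have hrange : ∀ (q : {S : Finset (Fin m) // S.card = k} × Perm (Fin k)),
        Set.range ((q.1.1.orderEmbOfFin q.1.2) ∘ q.2) = (q.1.1 : Set (Fin m)) := by
      intro q
      rw [Set.range_comp, Equiv.range_eq_univ, Set.image_univ,
        Finset.range_orderEmbOfFin]
    have hS : q1.1 = q2.1 := by
      have := (hrange q1).symm.trans (by rw [heq, hrange q2])
      exact Subtype.ext (Finset.coe_injective this)
    have hg : (q1.1.1.orderEmbOfFin q1.1.2) = (q2.1.1.orderEmbOfFin q2.1.2) := by
      rw [hS]
    have hperm : q1.2 = q2.2 := by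
      refine Equiv.ext fun i => ?_
      have hi : q1.1.1.orderEmbOfFin q1.1.2 (q1.2 i)
          = q2.1.1.orderEmbOfFin q2.1.2 (q2.2 i) := congrFun heq i
      rw [hg] at hi
      exact (q2.1.1.orderEmbOfFin q2.1.2).injective hi
    exact Prod.ext hS hperm
  · intro f hf
    simp only [Finset.mem_filter, Finset.mem_univ, true_and] at hf
    set S : Finset (Fin m) := Finset.univ.image f with hSdef
    have hS : S.card = k := by
      rw [hSdef, Finset.card_image_of_injective _ hf, Finset.card_univ,
        Fintype.card_fin]
    have hmem : ∀ i, f i ∈ S := fun i => Finset.mem_image_of_mem f (Finset.mem_univ i)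
    set t : Fin k → Fin k := fun i => (S.orderIsoOfFin hS).symm ⟨f i, hmem i⟩ with htdef
    have htinj : Function.Injective t := by
      intro a b hab
      have := congrArg (S.orderIsoOfFin hS) hab
      simp only [htdef, OrderIso.apply_symm_apply] at this
      exact hf (congrArg Subtype.val this)
    refine ⟨⟨⟨S, hS⟩, Equiv.ofBijective t (Finite.injective_iff_bijective.mp htinj)⟩,
      Finset.mem_univ _, ?_⟩
    funext i
    show S.orderEmbOfFin hS (t i) = f i
    rw [← Finset.coe_orderIsoOfFin_apply, htdef, OrderIso.apply_symm_apply]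
  · intro q _
    set g := q.1.1.orderEmbOfFin q.1.2 with hgdef
    have hsub : N.submatrix (g ∘ q.2) id = (N.submatrix g id).submatrix q.2 id := by
      ext i j; simp
    rw [hsub, Matrix.det_permute]
    simp only [Function.comp_apply]
    ring

/-- The `k`-th multiplicative compound of an `n × m` matrix `A`: the
`C(n,k) × C(m,k)` matrix indexed by the `k`-element subsets of the row and
column index sets, whose `(α, β)` entry is the `k × k` minor `det A[α, β]`
(rows `α` and columns `β` taken in increasing order). -/
def compound {F : Type*} [CommRing F] {n m : ℕ} (A : Matrix (Fin n) (Fin m) F) (k : ℕ) :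
    Matrix {S : Finset (Fin n) // S.card = k} {T : Finset (Fin m) // T.card = k} F :=
  Matrix.of fun S T =>
    (A.submatrix (S.1.orderEmbOfFin S.2) (T.1.orderEmbOfFin T.2)).det

/-- Cauchy–Binet formula for compound matrices: for `A : F^{n×m}`, `B : F^{m×p}`
and `1 ≤ k ≤ min(n,m,p)`, `(AB)^{(k)} = A^{(k)} B^{(k)}`. -/
theorem compound_mul {F : Type*} [CommRing F] {n m p : ℕ}
    (A : Matrix (Fin n) (Fin m) F) (B : Matrix (Fin m) (Fin p) F)
    (k : ℕ) (hk : 1 ≤ k) (hkn : k ≤ n) (hkm : k ≤ m) (hkp : k ≤ p) :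
    compound (A * B) k = compound A k * compound B k := by
  ext α γ
  simp only [compound, Matrix.mul_apply, Matrix.of_apply]
  have h : (A * B).submatrix (α.1.orderEmbOfFin α.2) (γ.1.orderEmbOfFin γ.2)
      = (A.submatrix (α.1.orderEmbOfFin α.2) id)
        * (B.submatrix id (γ.1.orderEmbOfFin γ.2)) := by
    ext i j
    simp [Matrix.mul_apply]
  rw [h, cauchyBinet]
  simp [Matrix.submatrix_submatrix]
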